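/- Let M be the minimizing multicurve for x ∈ H_1(S,ℤ) at a point X of Teichmüller space (the union of supports of all real minimizing cycles for x). Then there is a unique orientation of the curves of M so that every minimizing cycle for x is a nonnegative linear combination of the oriented curves of M. -/

import Mathlib

/-- **Orientation of the minimizing multicurve** (abstract form).  The curves of the
minimizing multicurve `M` for `x` at `X ∈ Teich(S)` are modelled by vectors
`v i ∈ H_1(S,ℝ)` with positive lengths `ℓ i`; a real cycle is a coefficient vector `k`
with `Σ k i • v i = x`, of length `L k = Σ |k i| ℓ i`, and the minimizing cycles are
those attaining the infimum `m = |x|_ℝ`.  Assuming `|2x|_ℝ = 2|x|_ℝ`, there is a choice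
of signs (an orientation) `ε i ∈ {1, -1}` of the curves such that every minimizing
cycle is a nonnegative linear combination of the oriented curves, and this orientation
is unique on the curves of `M` (those appearing in the support of some minimizing
cycle). -/
theorem minimizing_multicurve_orientation {V : Type} [AddCommGroup V] [Module ℝ V]
    (n : ℕ) (v : Fin n → V) (ℓ : Fin n → ℝ) (hℓ : ∀ i, 0 < ℓ i)
    (x : V) (hx : x ≠ 0)
    (m : ℝ) (hm : m = sInf {L | ∃ k : Fin n → ℝ, (∑ i, k i • v i) = x ∧
      L = ∑ i, |k i| * ℓ i})
    (P : Set (Fin n → ℝ))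
    (hP : P = {k | (∑ i, k i • v i) = x ∧ (∑ i, |k i| * ℓ i) = m})
    (hPne : P.Nonempty)
    (hdouble : sInf {L | ∃ k : Fin n → ℝ, (∑ i, k i • v i) = (2 : ℝ) • x ∧
      L = ∑ i, |k i| * ℓ i} = 2 * m) :
    ∃ ε : Fin n → ℝ, (∀ i, ε i = 1 ∨ ε i = -1) ∧
      (∀ k ∈ P, ∀ i, 0 ≤ ε i * k i) ∧
      (∀ ε' : Fin n → ℝ, (∀ i, ε' i = 1 ∨ ε' i = -1) →
        (∀ k ∈ P, ∀ i, 0 ≤ ε' i * k i) →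
        ∀ i, (∃ k ∈ P, k i ≠ 0) → ε' i = ε i) := by
  classical
  have hbdd : BddBelow {L | ∃ k : Fin n → ℝ, (∑ i, k i • v i) = (2 : ℝ) • x ∧
      L = ∑ i, |k i| * ℓ i} := by
    refine ⟨0, ?_⟩
    rintro L ⟨k, -, rfl⟩
    apply Finset.sum_nonneg
    intro j _
    exact mul_nonneg (abs_nonneg _) (hℓ j).le
  -- key sign-consistency lemma
  have key : ∀ k ∈ P, ∀ k' ∈ P, ∀ i, ¬ (k i < 0 ∧ 0 < k' i) := by
    rintro k hk k' hk' i ⟨h1, h2⟩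
    rw [hP] at hk hk'
    obtain ⟨hks, hkl⟩ := hk
    obtain ⟨hks', hkl'⟩ := hk'
    have hmem : (∑ j, |k j + k' j| * ℓ j) ∈ {L | ∃ c : Fin n → ℝ,
        (∑ i, c i • v i) = (2 : ℝ) • x ∧ L = ∑ i, |c i| * ℓ i} := by
      refine ⟨fun j => k j + k' j, ?_, rfl⟩
      have : (∑ j, (k j + k' j) • v j) = (∑ j, k j • v j) + ∑ j, k' j • v j := by
        rw [← Finset.sum_add_distrib]
        exact Finset.sum_congr rfl fun j _ => add_smul _ _ _
      rw [this, hks, hks', two_smul]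
    have hle := csInf_le hbdd hmem
    rw [hdouble] at hle
    have hlt : (∑ j, |k j + k' j| * ℓ j) < ∑ j, (|k j| + |k' j|) * ℓ j := by
      apply Finset.sum_lt_sum
      · intro j _
        exact mul_le_mul_of_nonneg_right (abs_add_le _ _) (hℓ j).le
      · refine ⟨i, Finset.mem_univ i, ?_⟩
        have habs : |k i + k' i| < |k i| + |k' i| := by
          rcases abs_cases (k i + k' i) with ⟨he, _⟩ | ⟨he, _⟩ <;>
            rcases abs_cases (k i) with ⟨h3, _⟩ | ⟨h3, _⟩ <;>
            rcases abs_cases (k' i) with ⟨h4, _⟩ | ⟨h4, _⟩ <;> linarith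
        exact mul_lt_mul_of_pos_right habs (hℓ i)
    have hsum : (∑ j, (|k j| + |k' j|) * ℓ j) = 2 * m := by
      have : (∑ j, (|k j| + |k' j|) * ℓ j)
          = (∑ j, |k j| * ℓ j) + ∑ j, |k' j| * ℓ j := by
        rw [← Finset.sum_add_distrib]
        exact Finset.sum_congr rfl fun j _ => add_mul _ _ _
      rw [this, hkl, hkl']; ring
    linarith
  refine ⟨fun i => if ∃ k ∈ P, k i < 0 then -1 else 1, fun i => by
    by_cases h : ∃ k ∈ P, k i < 0 <;> simp [h], ?_, ?_⟩
  · intro k hk i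
    by_cases h : ∃ k ∈ P, k i < 0
    · simp only [if_pos h]
      obtain ⟨k', hk', hk'i⟩ := h
      have := key k' hk' k hk i
      have : k i ≤ 0 := by
        by_contra hc
        exact this ⟨hk'i, lt_of_not_ge hc⟩
      nlinarith
    · simp only [if_neg h]
      push_neg at h
      have := h k hk
      nlinarith [not_lt.mp (by exact fun hc => (h k hk).not_gt hc : ¬ k i < 0)]
  · intro ε' hε' hε'P i ⟨k, hk, hki⟩
    have h1 := hε'P k hk i
    by_cases h : ∃ k ∈ P, k i < 0
    · simp only [if_pos h]
      obtain ⟨k', hk', hk'i⟩ := h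
      have h2 := hε'P k' hk' i
      rcases hε' i with he | he
      · rw [he] at h2; nlinarith
      · exact he
    · simp only [if_neg h]
      push_neg at h
      have hpos : 0 < k i := lt_of_le_of_ne (h k hk) (Ne.symm hki)
      rcases hε' i with he | he
      · exact he
      · rw [he] at h1; nlinarith
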